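/- Let n be a normalizer of M, x a character of M with x(n*n) ≠ 0, and y a character of M with x(n* h n) = y(h) · x(n*n) for all h ∈ M (i.e., y = αₙ(x)). Then y(n n*) = x(n*n). -/

import Mathlib

open scoped ComplexOrder InnerProductSpace

variable {A : Type*} [NormedRing A] [StarRing A] [CStarRing A]
  [NormedAlgebra ℂ A] [CompleteSpace A] [StarModule ℂ A]
  [PartialOrder A] [StarOrderedRing A]

/-- `n` is a normalizer of the subalgebra `M`: `n* M n ⊆ M` and `n M n* ⊆ M`
(in particular `n*n ∈ M` and `n n* ∈ M`, taking `h = 1`). -/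
structure IsNormalizer (M : StarSubalgebra ℂ A) (n : A) : Prop where
  conj_mem : ∀ h ∈ M, star n * h * n ∈ M
  conj_mem' : ∀ h ∈ M, n * h * star n ∈ M
  sq_mem : star n * n ∈ M
  sq_mem' : n * star n ∈ M

/-- `y = αₙ(x)`: the character `y` satisfies `x(n* h n) = y(h) · x(n*n)` for all `h ∈ M`. -/
def IsAlpha (M : StarSubalgebra ℂ A) (n : A) (hn : IsNormalizer M n)
    (x y : M →⋆ₐ[ℂ] ℂ) : Prop :=
  ∀ h : M, x ⟨star n * (h : A) * n, hn.conj_mem (h : A) h.2⟩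
    = y h * x ⟨star n * n, hn.sq_mem⟩

/-- `y` lies in the pseudo-orbit `𝒢(x₀)`: there is a normalizer `m` of `M` with
`x₀(m*m) ≠ 0` and `y = α_m(x₀)`. -/
def InPseudoOrbit (M : StarSubalgebra ℂ A) (x₀ y : M →⋆ₐ[ℂ] ℂ) : Prop :=
  ∃ m, ∃ hm : IsNormalizer M m,
    x₀ ⟨star m * m, hm.sq_mem⟩ ≠ 0 ∧ IsAlpha M m hm x₀ y

/-- If `n` is a normalizer of `M`, `x` a character with `x(n*n) ≠ 0` and `y = αₙ(x)`,
then `y(n n*) = x(n*n)`. -/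
theorem alpha_image_of_nnstar
    (M : StarSubalgebra ℂ A) (hMclosed : IsClosed (M : Set A))
    (hMcomm : ∀ a ∈ M, ∀ b ∈ M, a * b = b * a)
    (n : A) (hn : IsNormalizer M n)
    (x y : M →⋆ₐ[ℂ] ℂ)
    (hx : x ⟨star n * n, hn.sq_mem⟩ ≠ 0)
    (hy : IsAlpha M n hn x y) :
    y ⟨n * star n, hn.sq_mem'⟩ = x ⟨star n * n, hn.sq_mem⟩ := by
  have h1 := hy ⟨n * star n, hn.sq_mem'⟩
  have heq : (⟨star n * (n * star n) * n, hn.conj_mem _ hn.sq_mem'⟩ : M)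
      = ⟨star n * n, hn.sq_mem⟩ * ⟨star n * n, hn.sq_mem⟩ := by
    ext; simp [mul_assoc]
  rw [heq, map_mul] at h1
  field_simp at h1
  exact h1.symm
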